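/- Let f : ℝ → ℝ be smooth with f' nowhere flat, and let u : ℝ → ℝ be continuous and 2π-periodic. Assume either that u is not constant, or that u is constant with f''(u(0)) ≠ 0. Then the linear map sending a continuous 2π-periodic v : ℝ → ℝ to Φ(2π)·∫₀^{2π} f''(u(t))·v(t)·Φ(t)⁻¹·N₀·Φ(t) dt, where Φ = Φ_{f'∘u}, has range equal to {Φ(2π)·M : M ∈ M₂(ℝ), tr M = 0}; that is, the nonlinear monodromy map is a submersion at u. -/

import Mathlib

open Real Set Matrix

/-- A smooth function is nowhere flat if some derivative of order `r' ≤ r` (for a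
uniform `r`) is nonzero at every point. -/
def NowhereFlat (g : ℝ → ℝ) : Prop :=
  ∃ r : ℕ, 0 < r ∧ ∀ x : ℝ, ∃ r' : ℕ, 0 < r' ∧ r' ≤ r ∧ iteratedDeriv r' g x ≠ 0

/-- The matrix `N₀ = [[0,0],[1,0]]`. -/
def N0 : Matrix (Fin 2) (Fin 2) ℝ := !![0, 0; 1, 0]

lemma aux_iteratedDeriv_zero {h : ℝ → ℝ} {x : ℝ} (hh : h =ᶠ[nhds x] 0) (k : ℕ) :
    iteratedDeriv k h x = 0 := by
  induction k generalizing h with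
  | zero => simpa using hh.eq_of_nhds
  | succ n ih =>
      rw [iteratedDeriv_succ']
      have hd := hh.deriv
      have h0 : deriv (0 : ℝ → ℝ) = (0 : ℝ → ℝ) := by
        funext y; simp [Pi.zero_def]
      rw [h0] at hd
      exact ih hd

lemma aux_dense_ne {f : ℝ → ℝ} (hnf : NowhereFlat (deriv f)) (x ε : ℝ) (hε : 0 < ε) :
    ∃ y, |y - x| < ε ∧ deriv (deriv f) y ≠ 0 := by
  by_contra hc
  push_neg at hc
  have hz : (deriv (deriv f)) =ᶠ[nhds x] 0 := by
    filter_upwards [Metric.ball_mem_nhds x hε] with y hy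
    exact hc y (by simpa [Real.dist_eq] using hy)
  obtain ⟨r, -, hr⟩ := hnf
  obtain ⟨r', hr'0, -, hne⟩ := hr x
  obtain ⟨m, rfl⟩ : ∃ m, r' = m + 1 := ⟨r' - 1, (Nat.succ_pred_eq_of_pos hr'0).symm⟩
  rw [iteratedDeriv_succ'] at hne
  exact hne (aux_iteratedDeriv_zero hz m)

lemma aux_K (P : Matrix (Fin 2) (Fin 2) ℝ) (hdet : P 0 0 * P 1 1 - P 0 1 * P 1 0 = 1) :
    P⁻¹ * N0 * P = !![-(P 0 0 * P 0 1), -(P 0 1 * P 0 1); P 0 0 * P 0 0, P 0 0 * P 0 1] := by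
  have hd : P.det = 1 := by rw [Matrix.det_fin_two]; linarith
  have hinv : P⁻¹ = !![P 1 1, -(P 0 1); -(P 1 0), P 0 0] := by
    rw [Matrix.inv_def, hd, Matrix.adjugate_fin_two]
    norm_num
  rw [hinv, N0, Matrix.eta_fin_two P]
  ext i j
  fin_cases i <;> fin_cases j <;>
    (simp [Matrix.mul_apply, Fin.sum_univ_two]; try nlinarith [hdet])

theorem stmt_7 (f : ℝ → ℝ) (hf : ContDiff ℝ (⊤ : ℕ∞) f) (hnf : NowhereFlat (deriv f))
    (u : ℝ → ℝ) (hu : Continuous u) (huper : Function.Periodic u (2 * π))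
    (hcase : (¬ ∃ c : ℝ, u = fun _ => c) ∨
      (∃ c : ℝ, (u = fun _ => c) ∧ deriv (deriv f) c ≠ 0))
    -- `Φ` is the fundamental matrix of the potential `f' ∘ u`:
    (Φ : ℝ → Matrix (Fin 2) (Fin 2) ℝ)
    (hΦ0 : Φ 0 = 1)
    (hΦ : ∀ t : ℝ, ∀ i j, HasDerivAt (fun s => Φ s i j)
      ((!![0, 1; deriv f (u t), 0] * Φ t) i j) t) :
    (fun v : ℝ → ℝ => Φ (2 * π) *
        Matrix.of (fun i j : Fin 2 =>
          ∫ t in (0:ℝ)..(2 * π),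
            deriv (deriv f) (u t) * v t * (((Φ t)⁻¹ * N0 * Φ t) i j))) ''
      {v : ℝ → ℝ | Continuous v ∧ Function.Periodic v (2 * π)} =
    {X : Matrix (Fin 2) (Fin 2) ℝ |
      ∃ M : Matrix (Fin 2) (Fin 2) ℝ, M.trace = 0 ∧ X = Φ (2 * π) * M} := by
  haveI : Fact (0 < 2 * π) := ⟨by positivity⟩
  have hπ2 : (0:ℝ) < 2 * π := by positivity
  set q : ℝ → ℝ := fun t => deriv f (u t) with hq_def
  set g : ℝ → ℝ := fun t => deriv (deriv f) (u t) with hg_def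
  -- entry derivatives
  have hA : ∀ t, HasDerivAt (fun s => Φ s 0 0) (Φ t 1 0) t := by
    intro t; have h := hΦ t 0 0; simpa [Matrix.mul_apply, Fin.sum_univ_two] using h
  have hB : ∀ t, HasDerivAt (fun s => Φ s 0 1) (Φ t 1 1) t := by
    intro t; have h := hΦ t 0 1; simpa [Matrix.mul_apply, Fin.sum_univ_two] using h
  have hC : ∀ t, HasDerivAt (fun s => Φ s 1 0) (q t * Φ t 0 0) t := by
    intro t; have h := hΦ t 1 0; simpa [Matrix.mul_apply, Fin.sum_univ_two] using h
  have hD : ∀ t, HasDerivAt (fun s => Φ s 1 1) (q t * Φ t 0 1) t := by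
    intro t; have h := hΦ t 1 1; simpa [Matrix.mul_apply, Fin.sum_univ_two] using h
  have hAc : Continuous fun s => Φ s 0 0 :=
    continuous_iff_continuousAt.mpr fun t => (hA t).continuousAt
  have hBc : Continuous fun s => Φ s 0 1 :=
    continuous_iff_continuousAt.mpr fun t => (hB t).continuousAt
  -- determinant is 1
  have hdet : ∀ t, Φ t 0 0 * Φ t 1 1 - Φ t 0 1 * Φ t 1 0 = 1 := by
    intro t
    set W : ℝ → ℝ := fun s => Φ s 0 0 * Φ s 1 1 - Φ s 0 1 * Φ s 1 0 with hW
    have hder : ∀ s, HasDerivAt W 0 s := by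
      intro s
      have h := ((hA s).mul (hD s)).sub ((hB s).mul (hC s))
      convert h using 1 <;> first | rfl | ring
    have hconst : W t = W 0 :=
      is_const_of_deriv_eq_zero (fun x => (hder x).differentiableAt)
        (fun x => (hder x).deriv) t 0
    have h1 : W 0 = 1 := by simp [hW, hΦ0]
    calc Φ t 0 0 * Φ t 1 1 - Φ t 0 1 * Φ t 1 0 = W t := rfl
      _ = W 0 := hconst
      _ = 1 := h1
  have hK : ∀ t, (Φ t)⁻¹ * N0 * Φ t =
      !![-(Φ t 0 0 * Φ t 0 1), -(Φ t 0 1 * Φ t 0 1);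
         Φ t 0 0 * Φ t 0 0, Φ t 0 0 * Φ t 0 1] :=
    fun t => aux_K (Φ t) (hdet t)
  -- continuity and periodicity of g
  have hg2 : Continuous (deriv (deriv f)) := by
    have h2 : ContDiff ℝ (⊤ : ℕ∞) (deriv^[2] f) := ContDiff.iterate_deriv 2 hf
    have he : deriv^[2] f = deriv (deriv f) := by
      simp [Function.iterate_succ, Function.iterate_zero]
    rw [he] at h2
    exact h2.continuous
  have hg_cont : Continuous g := hg2.comp hu
  have hg_per : Function.Periodic g (2 * π) := fun t => by
    simp only [hg_def]; rw [huper t]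
  -- find t₀ ∈ (0, 2π) with g t₀ ≠ 0
  obtain ⟨t₀, ht₀, hgt₀⟩ : ∃ t₀, t₀ ∈ Ioo (0:ℝ) (2 * π) ∧ g t₀ ≠ 0 := by
    obtain ⟨t₁, ht₁⟩ : ∃ t, g t ≠ 0 := by
      rcases hcase with hnc | ⟨c, huc, hfc⟩
      · push_neg at hnc
        have hne : ∃ s₁ s₂ : ℝ, u s₁ ≠ u s₂ := by
          by_contra hcc
          push_neg at hcc
          exact hnc (u 0) (funext fun s => hcc s 0)
        obtain ⟨s₁, s₂, hs⟩ := hne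
        have hεpos : 0 < |u s₂ - u s₁| / 2 := by
          have := abs_pos.mpr (sub_ne_zero.mpr (Ne.symm hs))
          linarith
        obtain ⟨y, hy, hy'⟩ := aux_dense_ne hnf ((u s₁ + u s₂) / 2) (|u s₂ - u s₁| / 2) hεpos
        have hmem : y ∈ uIcc (u s₁) (u s₂) := by
          have hy2 := abs_lt.mp hy
          rcases le_total (u s₁) (u s₂) with hle | hle
          · have habs : |u s₂ - u s₁| = u s₂ - u s₁ := abs_of_nonneg (by linarith)
            rw [habs] at hy2
            rw [Set.uIcc_of_le hle]
            constructor <;> [linarith [hy2.1]; linarith [hy2.2]]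
          · have habs : |u s₂ - u s₁| = -(u s₂ - u s₁) := abs_of_nonpos (by linarith)
            rw [habs] at hy2
            rw [Set.uIcc_of_ge hle]
            constructor <;> [linarith [hy2.1]; linarith [hy2.2]]
        have himg := intermediate_value_uIcc (hu.continuousOn (s := uIcc s₁ s₂)) hmem
        obtain ⟨t, -, hty⟩ := himg
        refine ⟨t, ?_⟩
        simp only [hg_def]
        rw [hty]
        exact hy'
      · exact ⟨0, by simp [hg_def, huc, hfc]⟩
    -- translate t₁ into [0, 2π)
    set n : ℤ := ⌊t₁ / (2 * π)⌋ with hn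
    have hlow : (n : ℝ) * (2 * π) ≤ t₁ := by
      have h := Int.floor_le (t₁ / (2 * π))
      rw [← hn] at h
      calc (n : ℝ) * (2 * π) ≤ (t₁ / (2 * π)) * (2 * π) := by
            apply mul_le_mul_of_nonneg_right h (by positivity)
        _ = t₁ := by field_simp
    have hhigh : t₁ < ((n : ℝ) + 1) * (2 * π) := by
      have h := Int.lt_floor_add_one (t₁ / (2 * π))
      rw [← hn] at h
      calc t₁ = (t₁ / (2 * π)) * (2 * π) := by field_simp
        _ < ((n : ℝ) + 1) * (2 * π) := by
            apply mul_lt_mul_of_pos_right h hπ2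
    have ht' : g (t₁ - n * (2 * π)) = g t₁ := hg_per.sub_int_mul_eq n
    have ht'mem : 0 ≤ t₁ - n * (2 * π) ∧ t₁ - n * (2 * π) < 2 * π := by
      constructor <;> nlinarith
    rcases eq_or_lt_of_le ht'mem.1 with hz | hpos
    · -- t' = 0, use continuity at 0
      have hg0 : g 0 ≠ 0 := by rw [← hz] at ht'; rw [ht']; exact ht₁
      have hev : ∀ᶠ s in nhds (0:ℝ), g s ≠ 0 := hg_cont.continuousAt.eventually_ne hg0
      obtain ⟨δ, hδ, hδ'⟩ := Metric.eventually_nhds_iff.mp hev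
      refine ⟨min (δ/2) π, ⟨lt_min (by linarith) pi_pos, ?_⟩, ?_⟩
      · calc min (δ/2) π ≤ π := min_le_right _ _
          _ < 2 * π := by linarith [pi_pos]
      · apply hδ'
        rw [Real.dist_eq, sub_zero, abs_of_pos (lt_min (by linarith) pi_pos)]
        calc min (δ/2) π ≤ δ/2 := min_le_left _ _
          _ < δ := by linarith
    · exact ⟨t₁ - n * (2 * π), ⟨hpos, ht'mem.2⟩, ht' ▸ ht₁⟩
  -- a ball around t₀ inside (0,2π) where g ≠ 0
  obtain ⟨δ, hδpos, hball⟩ : ∃ δ > 0, Metric.ball t₀ δ ⊆ Ioo (0:ℝ) (2*π) ∩ {s | g s ≠ 0} := by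
    have hopen : IsOpen (Ioo (0:ℝ) (2*π) ∩ {s | g s ≠ 0}) :=
      isOpen_Ioo.inter (isOpen_compl_singleton.preimage hg_cont)
    have hmem : t₀ ∈ Ioo (0:ℝ) (2*π) ∩ {s | g s ≠ 0} := ⟨ht₀, hgt₀⟩
    obtain ⟨δ, hδ, hsub⟩ := Metric.isOpen_iff.mp hopen t₀ hmem
    exact ⟨δ, hδ, hsub⟩
  -- weight function and the three kernel functions
  set φ : ℝ → ℝ := fun t => Real.sin (t/2) ^ 2 with hφ_def
  have hφc : Continuous φ := by
    apply Continuous.pow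
    exact Real.continuous_sin.comp (continuous_id.div_const 2)
  have hφ_nonneg : ∀ t, 0 ≤ φ t := fun t => sq_nonneg _
  have hφ_pos : ∀ t ∈ Ioo (0:ℝ) (2*π), 0 < φ t := by
    intro t ht
    have : 0 < Real.sin (t/2) :=
      Real.sin_pos_of_pos_of_lt_pi (by linarith [ht.1]) (by linarith [ht.2])
    simp only [hφ_def]
    positivity
  have hφ0 : φ 0 = 0 := by simp [hφ_def]
  have hφ2π : φ (2*π) = 0 := by
    simp only [hφ_def]
    have : (2*π)/2 = π := by ring
    rw [this, Real.sin_pi]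
    ring
  set h0 : ℝ → ℝ := fun t => g t * (Φ t 0 0 * Φ t 0 1) with hh0_def
  set h1 : ℝ → ℝ := fun t => g t * (Φ t 0 1 * Φ t 0 1) with hh1_def
  set h2 : ℝ → ℝ := fun t => g t * (Φ t 0 0 * Φ t 0 0) with hh2_def
  have hh0c : Continuous h0 := hg_cont.mul (hAc.mul hBc)
  have hh1c : Continuous h1 := hg_cont.mul (hBc.mul hBc)
  have hh2c : Continuous h2 := hg_cont.mul (hAc.mul hAc)
  have hint : ∀ (pc : ℝ → ℝ), Continuous pc →
      IntervalIntegrable pc MeasureTheory.volume 0 (2*π) :=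
    fun pc h => h.intervalIntegrable _ _
  -- Gram matrix entries
  set I00 : ℝ := ∫ t in (0:ℝ)..(2*π), h0 t * h0 t * φ t with hI00_def
  set I01 : ℝ := ∫ t in (0:ℝ)..(2*π), h0 t * h1 t * φ t with hI01_def
  set I02 : ℝ := ∫ t in (0:ℝ)..(2*π), h0 t * h2 t * φ t with hI02_def
  set I10 : ℝ := ∫ t in (0:ℝ)..(2*π), h1 t * h0 t * φ t with hI10_def
  set I11 : ℝ := ∫ t in (0:ℝ)..(2*π), h1 t * h1 t * φ t with hI11_def
  set I12 : ℝ := ∫ t in (0:ℝ)..(2*π), h1 t * h2 t * φ t with hI12_def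
  set I20 : ℝ := ∫ t in (0:ℝ)..(2*π), h2 t * h0 t * φ t with hI20_def
  set I21 : ℝ := ∫ t in (0:ℝ)..(2*π), h2 t * h1 t * φ t with hI21_def
  set I22 : ℝ := ∫ t in (0:ℝ)..(2*π), h2 t * h2 t * φ t with hI22_def
  set G : Matrix (Fin 3) (Fin 3) ℝ := !![I00, I01, I02; I10, I11, I12; I20, I21, I22] with hG_def
  have hmv : ∀ (c : Fin 3 → ℝ) (i : Fin 3), G.mulVec c i =
      G i 0 * c 0 + G i 1 * c 1 + G i 2 * c 2 := by
    intro c i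
    simp [Matrix.mulVec, dotProduct, Fin.sum_univ_three]
  have hG00 : G 0 0 = I00 := by simp [hG_def]
  have hG01 : G 0 1 = I01 := by simp [hG_def]
  have hG02 : G 0 2 = I02 := by simp [hG_def]
  have hG10 : G 1 0 = I10 := by simp [hG_def]
  have hG11 : G 1 1 = I11 := by simp [hG_def]
  have hG12 : G 1 2 = I12 := by simp [hG_def]
  have hG20 : G 2 0 = I20 := by simp [hG_def]
  have hG21 : G 2 1 = I21 := by simp [hG_def]
  have hG22 : G 2 2 = I22 := by simp [hG_def]
  -- key integral expansion
  have key : ∀ p : ℝ → ℝ, Continuous p → ∀ c : Fin 3 → ℝ,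
      (∫ t in (0:ℝ)..(2*π), p t * (φ t * (c 0 * h0 t + c 1 * h1 t + c 2 * h2 t)))
        = c 0 * (∫ t in (0:ℝ)..(2*π), p t * h0 t * φ t)
        + c 1 * (∫ t in (0:ℝ)..(2*π), p t * h1 t * φ t)
        + c 2 * (∫ t in (0:ℝ)..(2*π), p t * h2 t * φ t) := by
    intro p hp c
    have heq : EqOn (fun t => p t * (φ t * (c 0 * h0 t + c 1 * h1 t + c 2 * h2 t)))
        (fun t => c 0 * (p t * h0 t * φ t) +
          (c 1 * (p t * h1 t * φ t) + c 2 * (p t * h2 t * φ t)))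
        (uIcc (0:ℝ) (2*π)) := fun t _ => by ring
    rw [intervalIntegral.integral_congr heq,
        intervalIntegral.integral_add
          (hint (fun t => c 0 * (p t * h0 t * φ t)) (continuous_const.mul ((hp.mul hh0c).mul hφc)))
          ((hint (fun t => c 1 * (p t * h1 t * φ t)) (continuous_const.mul ((hp.mul hh1c).mul hφc))).add
            (hint (fun t => c 2 * (p t * h2 t * φ t)) (continuous_const.mul ((hp.mul hh2c).mul hφc)))),
        intervalIntegral.integral_add
          (hint (fun t => c 1 * (p t * h1 t * φ t)) (continuous_const.mul ((hp.mul hh1c).mul hφc)))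
          (hint (fun t => c 2 * (p t * h2 t * φ t)) (continuous_const.mul ((hp.mul hh2c).mul hφc))),
        intervalIntegral.integral_const_mul, intervalIntegral.integral_const_mul,
        intervalIntegral.integral_const_mul]
    ring
  -- injectivity of Gram matrix
  have hinj : ∀ c : Fin 3 → ℝ, G.mulVec c = 0 → c = 0 := by
    intro c hc
    have hr0 : I00 * c 0 + I01 * c 1 + I02 * c 2 = 0 := by
      have e := congrFun hc 0
      rw [hmv c 0, hG00, hG01, hG02] at e
      simpa using e
    have hr1 : I10 * c 0 + I11 * c 1 + I12 * c 2 = 0 := by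
      have e := congrFun hc 1
      rw [hmv c 1, hG10, hG11, hG12] at e
      simpa using e
    have hr2 : I20 * c 0 + I21 * c 1 + I22 * c 2 = 0 := by
      have e := congrFun hc 2
      rw [hmv c 2, hG20, hG21, hG22] at e
      simpa using e
    set H : ℝ → ℝ := fun t => c 0 * h0 t + c 1 * h1 t + c 2 * h2 t with hH_def
    have hHc : Continuous H := ((continuous_const.mul hh0c).add (continuous_const.mul hh1c)).add (continuous_const.mul hh2c)
    have hH0int : (∫ t in (0:ℝ)..(2*π), H t * h0 t * φ t) = 0 := by
      have ecg : (∫ t in (0:ℝ)..(2*π), H t * h0 t * φ t)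
          = ∫ t in (0:ℝ)..(2*π), h0 t * (φ t * (c 0 * h0 t + c 1 * h1 t + c 2 * h2 t)) := by
        apply intervalIntegral.integral_congr
        intro t _
        simp only [hH_def]
        ring
      rw [ecg, key h0 hh0c c, ← hI00_def, ← hI01_def, ← hI02_def]
      linarith
    have hH1int : (∫ t in (0:ℝ)..(2*π), H t * h1 t * φ t) = 0 := by
      have ecg : (∫ t in (0:ℝ)..(2*π), H t * h1 t * φ t)
          = ∫ t in (0:ℝ)..(2*π), h1 t * (φ t * (c 0 * h0 t + c 1 * h1 t + c 2 * h2 t)) := by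
        apply intervalIntegral.integral_congr
        intro t _
        simp only [hH_def]
        ring
      rw [ecg, key h1 hh1c c, ← hI10_def, ← hI11_def, ← hI12_def]
      linarith
    have hH2int : (∫ t in (0:ℝ)..(2*π), H t * h2 t * φ t) = 0 := by
      have ecg : (∫ t in (0:ℝ)..(2*π), H t * h2 t * φ t)
          = ∫ t in (0:ℝ)..(2*π), h2 t * (φ t * (c 0 * h0 t + c 1 * h1 t + c 2 * h2 t)) := by
        apply intervalIntegral.integral_congr
        intro t _
        simp only [hH_def]
        ring
      rw [ecg, key h2 hh2c c, ← hI20_def, ← hI21_def, ← hI22_def]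
      linarith
    have hsq : (∫ t in (0:ℝ)..(2*π), H t ^ 2 * φ t) = 0 := by
      have ecg : (∫ t in (0:ℝ)..(2*π), H t ^ 2 * φ t)
          = ∫ t in (0:ℝ)..(2*π), H t * (φ t * (c 0 * h0 t + c 1 * h1 t + c 2 * h2 t)) := by
        apply intervalIntegral.integral_congr
        intro t _
        simp only [hH_def]
        ring
      rw [ecg, key H hHc c, hH0int, hH1int, hH2int]
      ring
    have hHzero : ∀ s ∈ Ioo (0:ℝ) (2*π), H s = 0 := by
      intro s hs
      by_contra hHs
      have hpos : 0 < ∫ t in (0:ℝ)..(2*π), H t ^ 2 * φ t := by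
        apply intervalIntegral.integral_pos hπ2
        · exact ((hHc.pow 2).mul hφc).continuousOn
        · intro x _
          exact mul_nonneg (sq_nonneg _) (hφ_nonneg x)
        · refine ⟨s, ⟨hs.1.le, hs.2.le⟩, ?_⟩
          have h1 : 0 < H s ^ 2 := by positivity
          exact mul_pos h1 (hφ_pos s hs)
      linarith
    -- F vanishes near t₀
    set F : ℝ → ℝ := fun s =>
      c 0 * (Φ s 0 0 * Φ s 0 1) + c 1 * (Φ s 0 1 * Φ s 0 1) + c 2 * (Φ s 0 0 * Φ s 0 0)
      with hF_def
    have hF0 : ∀ s ∈ Metric.ball t₀ δ, F s = 0 := by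
      intro s hs
      obtain ⟨hs1, hs2⟩ := hball hs
      have hHs : H s = 0 := hHzero s hs1
      have hgF : H s = g s * F s := by
        simp only [hH_def, hh0_def, hh1_def, hh2_def, hF_def]
        ring
      rw [hgF] at hHs
      exact (mul_eq_zero.mp hHs).resolve_left hs2
    set F1 : ℝ → ℝ := fun s =>
      c 0 * (Φ s 1 0 * Φ s 0 1 + Φ s 0 0 * Φ s 1 1)
      + c 1 * (Φ s 1 1 * Φ s 0 1 + Φ s 0 1 * Φ s 1 1)
      + c 2 * (Φ s 1 0 * Φ s 0 0 + Φ s 0 0 * Φ s 1 0) with hF1_def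
    have hFd : ∀ s, HasDerivAt F (F1 s) s := by
      intro s
      have hd1 := (((hA s).mul (hB s)).const_mul (c 0))
      have hd2 := (((hB s).mul (hB s)).const_mul (c 1))
      have hd3 := (((hA s).mul (hA s)).const_mul (c 2))
      exact (hd1.add hd2).add hd3
    have hF10 : ∀ s ∈ Metric.ball t₀ δ, F1 s = 0 := by
      intro s hs
      have hev : (fun _ => (0:ℝ)) =ᶠ[nhds s] F := by
        filter_upwards [Metric.isOpen_ball.mem_nhds hs] with y hy
        exact (hF0 y hy).symm
      have hzero' : HasDerivAt (fun _ => (0:ℝ)) (F1 s) s :=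
        (hFd s).congr_of_eventuallyEq hev
      have := (hasDerivAt_const s (0:ℝ)).unique hzero'
      linarith
    -- second derivative at t₀
    have hF1d : HasDerivAt F1
        (c 0 * ((q t₀ * Φ t₀ 0 0) * Φ t₀ 0 1 + Φ t₀ 1 0 * Φ t₀ 1 1
            + (Φ t₀ 1 0 * Φ t₀ 1 1 + Φ t₀ 0 0 * (q t₀ * Φ t₀ 0 1)))
        + c 1 * ((q t₀ * Φ t₀ 0 1) * Φ t₀ 0 1 + Φ t₀ 1 1 * Φ t₀ 1 1
            + (Φ t₀ 1 1 * Φ t₀ 1 1 + Φ t₀ 0 1 * (q t₀ * Φ t₀ 0 1)))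
        + c 2 * ((q t₀ * Φ t₀ 0 0) * Φ t₀ 0 0 + Φ t₀ 1 0 * Φ t₀ 1 0
            + (Φ t₀ 1 0 * Φ t₀ 1 0 + Φ t₀ 0 0 * (q t₀ * Φ t₀ 0 0)))) t₀ := by
      have hd1 := ((((hC t₀).mul (hB t₀)).add ((hA t₀).mul (hD t₀))).const_mul (c 0))
      have hd2 := ((((hD t₀).mul (hB t₀)).add ((hB t₀).mul (hD t₀))).const_mul (c 1))
      have hd3 := ((((hC t₀).mul (hA t₀)).add ((hA t₀).mul (hC t₀))).const_mul (c 2))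
      exact (hd1.add hd2).add hd3
    have e3raw : c 0 * ((q t₀ * Φ t₀ 0 0) * Φ t₀ 0 1 + Φ t₀ 1 0 * Φ t₀ 1 1
            + (Φ t₀ 1 0 * Φ t₀ 1 1 + Φ t₀ 0 0 * (q t₀ * Φ t₀ 0 1)))
        + c 1 * ((q t₀ * Φ t₀ 0 1) * Φ t₀ 0 1 + Φ t₀ 1 1 * Φ t₀ 1 1
            + (Φ t₀ 1 1 * Φ t₀ 1 1 + Φ t₀ 0 1 * (q t₀ * Φ t₀ 0 1)))
        + c 2 * ((q t₀ * Φ t₀ 0 0) * Φ t₀ 0 0 + Φ t₀ 1 0 * Φ t₀ 1 0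
            + (Φ t₀ 1 0 * Φ t₀ 1 0 + Φ t₀ 0 0 * (q t₀ * Φ t₀ 0 0))) = 0 := by
      have hev : (fun _ => (0:ℝ)) =ᶠ[nhds t₀] F1 := by
        filter_upwards [Metric.isOpen_ball.mem_nhds (Metric.mem_ball_self hδpos)] with y hy
        exact (hF10 y hy).symm
      have hzero' := hF1d.congr_of_eventuallyEq hev
      exact ((hasDerivAt_const t₀ (0:ℝ)).unique hzero').symm
    have e1 : c 0 * (Φ t₀ 0 0 * Φ t₀ 0 1) + c 1 * (Φ t₀ 0 1 * Φ t₀ 0 1)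
        + c 2 * (Φ t₀ 0 0 * Φ t₀ 0 0) = 0 := hF0 t₀ (Metric.mem_ball_self hδpos)
    have e2 : c 0 * (Φ t₀ 1 0 * Φ t₀ 0 1 + Φ t₀ 0 0 * Φ t₀ 1 1)
        + c 1 * (Φ t₀ 1 1 * Φ t₀ 0 1 + Φ t₀ 0 1 * Φ t₀ 1 1)
        + c 2 * (Φ t₀ 1 0 * Φ t₀ 0 0 + Φ t₀ 0 0 * Φ t₀ 1 0) = 0 :=
      hF10 t₀ (Metric.mem_ball_self hδpos)
    have e3 : c 0 * (Φ t₀ 1 0 * Φ t₀ 1 1) + c 1 * (Φ t₀ 1 1 * Φ t₀ 1 1)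
        + c 2 * (Φ t₀ 1 0 * Φ t₀ 1 0) = 0 := by
      linear_combination (1/2 : ℝ) * e3raw - q t₀ * e1
    have hd := hdet t₀
    have hc2 : c 2 = 0 := by
      linear_combination (Φ t₀ 1 1)^2 * e1 - Φ t₀ 1 1 * Φ t₀ 0 1 * e2 + (Φ t₀ 0 1)^2 * e3
        - c 2 * (Φ t₀ 0 0 * Φ t₀ 1 1 - Φ t₀ 0 1 * Φ t₀ 1 0 + 1) * hd
    have hc1 : c 1 = 0 := by
      linear_combination (Φ t₀ 1 0)^2 * e1 - Φ t₀ 1 0 * Φ t₀ 0 0 * e2 + (Φ t₀ 0 0)^2 * e3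
        - c 1 * (Φ t₀ 0 0 * Φ t₀ 1 1 - Φ t₀ 0 1 * Φ t₀ 1 0 + 1) * hd
    have hc0 : c 0 = 0 := by
      rw [hc1, hc2] at e1 e2 e3
      linear_combination (Φ t₀ 0 0 * Φ t₀ 1 1 + Φ t₀ 0 1 * Φ t₀ 1 0) * e2
        - 4 * (Φ t₀ 1 0 * Φ t₀ 1 1) * e1
        - c 0 * (Φ t₀ 0 0 * Φ t₀ 1 1 - Φ t₀ 0 1 * Φ t₀ 1 0 + 1) * hd
    funext i
    fin_cases i
    · simpa using hc0
    · simpa using hc1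
    · simpa using hc2
  -- surjectivity of the Gram matrix
  have hsurj : Function.Surjective G.mulVec := by
    have hinj' : Function.Injective G.mulVecLin := by
      intro x y hxy
      have hsub : G.mulVec (x - y) = 0 := by
        rw [Matrix.mulVec_sub]
        simp only [Matrix.mulVecLin_apply] at hxy
        rw [hxy]
        simp
      have := hinj (x - y) hsub
      exact sub_eq_zero.mp this
    have hs := LinearMap.injective_iff_surjective.mp hinj'
    intro m
    obtain ⟨x, hx⟩ := hs m
    exact ⟨x, by rwa [Matrix.mulVecLin_apply] at hx⟩
  -- now prove the set equality
  ext X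
  simp only [Set.mem_image, Set.mem_setOf_eq]
  constructor
  · rintro ⟨v, ⟨hvc, hvper⟩, rfl⟩
    refine ⟨Matrix.of (fun i j : Fin 2 =>
      ∫ t in (0:ℝ)..(2 * π), g t * v t * (((Φ t)⁻¹ * N0 * Φ t) i j)), ?_, rfl⟩
    rw [Matrix.trace_fin_two]
    simp only [Matrix.of_apply]
    have h00 : (∫ t in (0:ℝ)..(2*π), g t * v t * (((Φ t)⁻¹ * N0 * Φ t) 0 0))
        = - ∫ t in (0:ℝ)..(2*π), g t * v t * (((Φ t)⁻¹ * N0 * Φ t) 1 1) := by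
      rw [← intervalIntegral.integral_neg]
      apply intervalIntegral.integral_congr
      intro t _
      dsimp only
      rw [hK t]
      simp
      try ring
    rw [h00]
    ring
  · rintro ⟨M, hMtr, rfl⟩
    rw [Matrix.trace_fin_two] at hMtr
    obtain ⟨cv, hcv⟩ := hsurj ![-(M 0 0), -(M 0 1), M 1 0]
    set w : ℝ → ℝ := fun t => φ t * (cv 0 * h0 t + cv 1 * h1 t + cv 2 * h2 t) with hw_def
    have hwc : Continuous w :=
      hφc.mul (((continuous_const.mul hh0c).add (continuous_const.mul hh1c)).add (continuous_const.mul hh2c))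
    have hw0 : w 0 = 0 := by simp [hw_def, hφ0]
    have hw2π : w (2*π) = 0 := by simp [hw_def, hφ2π]
    have hwper : w 0 = w (0 + 2*π) := by rw [hw0, zero_add, hw2π]
    set v : ℝ → ℝ := fun t => AddCircle.liftIco (2*π) 0 w (t : AddCircle (2*π)) with hv_def
    have hvc : Continuous v :=
      (AddCircle.liftIco_continuous hwper hwc.continuousOn).comp (AddCircle.continuous_mk' (2*π))
    have hvper : Function.Periodic v (2*π) := by
      intro t
      simp only [hv_def]
      congr 1
      exact AddCircle.coe_add_period (2*π) t
    have hveq : EqOn v w (uIcc (0:ℝ) (2*π)) := by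
      rw [uIcc_of_le (by linarith)]
      intro t ht
      rcases lt_or_eq_of_le ht.2 with hlt | heq
      · simp only [hv_def]
        exact AddCircle.liftIco_coe_apply (by rw [zero_add]; exact ⟨ht.1, hlt⟩)
      · have hv2π : v t = v 0 := by
          rw [heq]
          have hp := hvper 0
          rw [zero_add] at hp
          exact hp
        have hv0 : v 0 = w 0 := by
          simp only [hv_def]
          exact AddCircle.liftIco_coe_apply (by rw [zero_add]; exact ⟨le_refl 0, hπ2⟩)
        rw [hv2π, hv0, hw0, heq, hw2π]
    -- row integrals
    have hcv0 : G.mulVec cv 0 = -(M 0 0) := by rw [hcv]; simp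
    have hcv1 : G.mulVec cv 1 = -(M 0 1) := by rw [hcv]; simp
    have hcv2 : G.mulVec cv 2 = M 1 0 := by rw [hcv]; simp
    have hrow0 : (∫ t in (0:ℝ)..(2*π), h0 t * (φ t * (cv 0 * h0 t + cv 1 * h1 t + cv 2 * h2 t)))
        = -(M 0 0) := by
      rw [key h0 hh0c cv, ← hI00_def, ← hI01_def, ← hI02_def]
      rw [hmv cv 0, hG00, hG01, hG02] at hcv0
      linarith
    have hrow1 : (∫ t in (0:ℝ)..(2*π), h1 t * (φ t * (cv 0 * h0 t + cv 1 * h1 t + cv 2 * h2 t)))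
        = -(M 0 1) := by
      rw [key h1 hh1c cv, ← hI10_def, ← hI11_def, ← hI12_def]
      rw [hmv cv 1, hG10, hG11, hG12] at hcv1
      linarith
    have hrow2 : (∫ t in (0:ℝ)..(2*π), h2 t * (φ t * (cv 0 * h0 t + cv 1 * h1 t + cv 2 * h2 t)))
        = M 1 0 := by
      rw [key h2 hh2c cv, ← hI20_def, ← hI21_def, ← hI22_def]
      rw [hmv cv 2, hG20, hG21, hG22] at hcv2
      linarith
    refine ⟨v, ⟨hvc, hvper⟩, ?_⟩
    have hM : (Matrix.of (fun i j : Fin 2 =>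
        ∫ t in (0:ℝ)..(2 * π), g t * v t * (((Φ t)⁻¹ * N0 * Φ t) i j))) = M := by
      ext i j
      fin_cases i <;> fin_cases j <;> simp only [Matrix.of_apply]
      · -- entry (0,0)
        show (∫ t in (0:ℝ)..(2*π), g t * v t * (((Φ t)⁻¹ * N0 * Φ t) 0 0)) = M 0 0
        have ecg : (∫ t in (0:ℝ)..(2*π), g t * v t * (((Φ t)⁻¹ * N0 * Φ t) 0 0))
            = ∫ t in (0:ℝ)..(2*π),
              -(h0 t * (φ t * (cv 0 * h0 t + cv 1 * h1 t + cv 2 * h2 t))) := by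
          apply intervalIntegral.integral_congr
          intro t ht
          dsimp only
          rw [hK t, hveq ht]
          simp only [hh0_def, hh1_def, hh2_def, hw_def]
          simp
          ring
        rw [ecg, intervalIntegral.integral_neg, hrow0]
        ring
      · -- entry (0,1)
        show (∫ t in (0:ℝ)..(2*π), g t * v t * (((Φ t)⁻¹ * N0 * Φ t) 0 1)) = M 0 1
        have ecg : (∫ t in (0:ℝ)..(2*π), g t * v t * (((Φ t)⁻¹ * N0 * Φ t) 0 1))
            = ∫ t in (0:ℝ)..(2*π),
              -(h1 t * (φ t * (cv 0 * h0 t + cv 1 * h1 t + cv 2 * h2 t))) := by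
          apply intervalIntegral.integral_congr
          intro t ht
          dsimp only
          rw [hK t, hveq ht]
          simp only [hh0_def, hh1_def, hh2_def, hw_def]
          simp
          ring
        rw [ecg, intervalIntegral.integral_neg, hrow1]
        ring
      · -- entry (1,0)
        show (∫ t in (0:ℝ)..(2*π), g t * v t * (((Φ t)⁻¹ * N0 * Φ t) 1 0)) = M 1 0
        have ecg : (∫ t in (0:ℝ)..(2*π), g t * v t * (((Φ t)⁻¹ * N0 * Φ t) 1 0))
            = ∫ t in (0:ℝ)..(2*π),
              h2 t * (φ t * (cv 0 * h0 t + cv 1 * h1 t + cv 2 * h2 t)) := by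
          apply intervalIntegral.integral_congr
          intro t ht
          dsimp only
          rw [hK t, hveq ht]
          simp only [hh0_def, hh1_def, hh2_def, hw_def]
          simp
          ring
        rw [ecg, hrow2]
      · -- entry (1,1)
        show (∫ t in (0:ℝ)..(2*π), g t * v t * (((Φ t)⁻¹ * N0 * Φ t) 1 1)) = M 1 1
        have ecg : (∫ t in (0:ℝ)..(2*π), g t * v t * (((Φ t)⁻¹ * N0 * Φ t) 1 1))
            = ∫ t in (0:ℝ)..(2*π),
              h0 t * (φ t * (cv 0 * h0 t + cv 1 * h1 t + cv 2 * h2 t)) := by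
          apply intervalIntegral.integral_congr
          intro t ht
          dsimp only
          rw [hK t, hveq ht]
          simp only [hh0_def, hh1_def, hh2_def, hw_def]
          simp
          ring
        rw [ecg, hrow0]
        linarith
    rw [hM]
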